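/- Let T be a tree on n ≥ 3 vertices, let w be a leaf of T, and let T' = T - w. Then F(T') < F(T) and F*(T') < F*(T). Moreover, for every vertex v of T', one has f_{T'}(v) < f_T(v), and f*_{T'}(v) ≤ f*_T(v) with equality if and only if T is a path and v is the endvertex of T other than w. -/

import Mathlib

open SimpleGraph

/-- A subtree of a graph `G` is a nonempty set of vertices inducing a connected subgraph. -/
def IsSubtree {V : Type} (G : SimpleGraph V) (s : Finset V) : Prop :=
  s.Nonempty ∧ (G.induce (s : Set V)).Connected

/-- `F(G)`: the number of subtrees of `G`. -/
noncomputable def numSubtrees {V : Type} (G : SimpleGraph V) : ℕ :=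
  {s : Finset V | IsSubtree G s}.ncard

/-- A leaf is a vertex of degree 1. -/
def IsLeaf {V : Type} (G : SimpleGraph V) (v : V) : Prop :=
  (G.neighborSet v).ncard = 1

/-- `F*(G)`: the number of subtrees of `G` containing at least one leaf of `G`. -/
noncomputable def numLeafSubtrees {V : Type} (G : SimpleGraph V) : ℕ :=
  {s : Finset V | IsSubtree G s ∧ ∃ v ∈ s, IsLeaf G v}.ncard

/-- `f_G(v)`: the number of subtrees of `G` containing the vertex `v`. -/
noncomputable def numSubtreesContaining {V : Type} (G : SimpleGraph V) (v : V) : ℕ :=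
  {s : Finset V | IsSubtree G s ∧ v ∈ s}.ncard

/-- `f*_G(v)`: the number of subtrees of `G` containing `v` and at least one leaf of `G`
different from `v`. -/
noncomputable def numLeafSubtreesContaining {V : Type} (G : SimpleGraph V) (v : V) : ℕ :=
  {s : Finset V | IsSubtree G s ∧ v ∈ s ∧ ∃ w ∈ s, w ≠ v ∧ IsLeaf G w}.ncard

/-- A finite set of edges of `G` that are pairwise non-incident. -/
def IsMatchingSet {V : Type} (G : SimpleGraph V) (M : Finset (Sym2 V)) : Prop :=
  (M : Set (Sym2 V)) ⊆ G.edgeSet ∧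
    ∀ e ∈ M, ∀ f ∈ M, e ≠ f → ∀ v : V, ¬(v ∈ e ∧ v ∈ f)

/-- The matching number: the maximum size of a set of pairwise non-incident edges. -/
noncomputable def matchingNumber {V : Type} (G : SimpleGraph V) : ℕ :=
  sSup {k | ∃ M : Finset (Sym2 V), IsMatchingSet G M ∧ M.card = k}

/-- `G` has a perfect matching: pairwise non-incident edges covering every vertex. -/
def HasPerfectMatching {V : Type} (G : SimpleGraph V) : Prop :=
  ∃ M : Finset (Sym2 V), IsMatchingSet G M ∧ ∀ v : V, ∃ e ∈ M, v ∈ e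

/-- A dominating set: every vertex outside `S` has a neighbour in `S`. -/
def IsDominating {V : Type} (G : SimpleGraph V) (S : Set V) : Prop :=
  ∀ v : V, v ∉ S → ∃ u ∈ S, G.Adj u v

/-- The domination number: the minimum size of a dominating set. -/
noncomputable def dominationNumber {V : Type} (G : SimpleGraph V) : ℕ :=
  sInf {k | ∃ S : Finset V, IsDominating G (S : Set V) ∧ S.card = k}

/-- The tree `A(n,q)`: a center vertex adjacent to `n - 2q + 1` leaves and to the
midpoints of `q - 1` pendant paths of length 2. -/
def treeA (n q : ℕ) : SimpleGraph (Unit ⊕ Fin (n - 2 * q + 1) ⊕ Fin (q - 1) ⊕ Fin (q - 1)) :=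
  SimpleGraph.fromRel fun x y =>
    match x, y with
    | Sum.inl _, Sum.inr (Sum.inl _) => True
    | Sum.inl _, Sum.inr (Sum.inr (Sum.inl _)) => True
    | Sum.inr (Sum.inr (Sum.inl i)), Sum.inr (Sum.inr (Sum.inr j)) => i = j
    | _, _ => False

/-- The corona `G ∘ K₁`: attach one new pendant vertex to each vertex of `G`. -/
def corona {V : Type} (G : SimpleGraph V) : SimpleGraph (V ⊕ V) :=
  SimpleGraph.fromRel fun x y =>
    match x, y with
    | Sum.inl a, Sum.inl b => G.Adj a b
    | Sum.inl a, Sum.inr b => a = b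
    | _, _ => False

/-- `P₄(1^a, 1^b)`: a path on 4 vertices with `a` pendant vertices attached to one
endvertex and `b` pendant vertices attached to the other endvertex. -/
def treeP4 (a b : ℕ) : SimpleGraph (Fin 4 ⊕ Fin a ⊕ Fin b) :=
  SimpleGraph.fromRel fun x y =>
    match x, y with
    | Sum.inl i, Sum.inl j => (j : ℕ) = (i : ℕ) + 1
    | Sum.inl i, Sum.inr (Sum.inl _) => i = 0
    | Sum.inl i, Sum.inr (Sum.inr _) => i = 3
    | _, _ => False

/-- The broom `T_{n,Δ}`: a path on `n - Δ + 1` vertices with `Δ - 1` pendant vertices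
attached to one endvertex. -/
def broom (n Δ : ℕ) : SimpleGraph (Fin (n - Δ + 1) ⊕ Fin (Δ - 1)) :=
  SimpleGraph.fromRel fun x y =>
    match x, y with
    | Sum.inl i, Sum.inl j => (j : ℕ) = (i : ℕ) + 1
    | Sum.inl i, Sum.inr _ => (i : ℕ) = 0
    | _, _ => False

/-- `T'_{n,Δ}`: a path on `n - 2Δ + 3` vertices with `Δ - 2` pendant paths of length 2
and one pendant edge attached to one endvertex of the path. -/
def treeT' (n Δ : ℕ) :
    SimpleGraph (Fin (n - 2 * Δ + 3) ⊕ Fin (Δ - 2) ⊕ Fin (Δ - 2) ⊕ Unit) :=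
  SimpleGraph.fromRel fun x y =>
    match x, y with
    | Sum.inl i, Sum.inl j => (j : ℕ) = (i : ℕ) + 1
    | Sum.inl i, Sum.inr (Sum.inl _) => (i : ℕ) = 0
    | Sum.inr (Sum.inl i), Sum.inr (Sum.inr (Sum.inl j)) => i = j
    | Sum.inl i, Sum.inr (Sum.inr (Sum.inr _)) => (i : ℕ) = 0
    | _, _ => False

/-- The spider with `i` legs of length `l` and `j` legs of length `L`. -/
def spider (i l j L : ℕ) : SimpleGraph (Unit ⊕ (Fin i × Fin l) ⊕ (Fin j × Fin L)) :=
  SimpleGraph.fromRel fun x y =>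
    match x, y with
    | Sum.inl _, Sum.inr (Sum.inl (_, t)) => (t : ℕ) = 0
    | Sum.inl _, Sum.inr (Sum.inr (_, t)) => (t : ℕ) = 0
    | Sum.inr (Sum.inl (a, s)), Sum.inr (Sum.inl (b, t)) => a = b ∧ (t : ℕ) = (s : ℕ) + 1
    | Sum.inr (Sum.inr (a, s)), Sum.inr (Sum.inr (b, t)) => a = b ∧ (t : ℕ) = (s : ℕ) + 1
    | _, _ => False

/-- `Ť_{n,k}^d`: a path `v_1 v_2 … v_{d+1}` on `d + 1` vertices with `n - d - 1`
pendant vertices attached to the vertex `v_k` (`1 ≤ k ≤ d + 1`). -/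
def treeHat (n d k : ℕ) : SimpleGraph (Fin (d + 1) ⊕ Fin (n - d - 1)) :=
  SimpleGraph.fromRel fun x y =>
    match x, y with
    | Sum.inl i, Sum.inl j => (j : ℕ) = (i : ℕ) + 1
    | Sum.inl i, Sum.inr _ => (i : ℕ) + 1 = k
    | _, _ => False

/-- The tree obtained from the disjoint union of `T` and a rooted tree `X` by
identifying the root `u` of `X` with the vertex `x` of `T`. -/
def graft {A B : Type} (T : SimpleGraph A) (X : SimpleGraph B) (x : A) (u : B) :
    SimpleGraph (A ⊕ {b : B // b ≠ u}) :=
  SimpleGraph.fromRel fun p q =>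
    match p, q with
    | Sum.inl a, Sum.inl b => T.Adj a b
    | Sum.inr a, Sum.inr b => X.Adj (a : B) (b : B)
    | Sum.inl a, Sum.inr b => a = x ∧ X.Adj u (b : B)
    | Sum.inr _, Sum.inl _ => False

/-- The tree obtained from the disjoint union of `G` and `H` by adding the edge `uv`. -/
def joinByEdge {A B : Type} (G : SimpleGraph A) (H : SimpleGraph B) (u : A) (v : B) :
    SimpleGraph (A ⊕ B) :=
  SimpleGraph.fromRel fun p q =>
    match p, q with
    | Sum.inl a, Sum.inl b => G.Adj a b
    | Sum.inr a, Sum.inr b => H.Adj a b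
    | Sum.inl a, Sum.inr b => a = u ∧ b = v
    | Sum.inr _, Sum.inl _ => False

/-- The graph obtained from `G` by attaching one new pendant vertex to `x`. -/
def attachPendant {A : Type} (G : SimpleGraph A) (x : A) : SimpleGraph (A ⊕ Unit) :=
  SimpleGraph.fromRel fun p q =>
    match p, q with
    | Sum.inl a, Sum.inl b => G.Adj a b
    | Sum.inl a, Sum.inr _ => a = x
    | _, _ => False

namespace DelLeaf
open SimpleGraph
variable {V : Type} {G : SimpleGraph V}

/-- map a finset of a subtype to the ambient type -/
def M {S : Set V} (s : Finset ↥S) : Finset V := s.map ⟨Subtype.val, Subtype.val_injective⟩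

lemma mem_M {S : Set V} {s : Finset ↥S} {x : V} :
    x ∈ M s ↔ ∃ h : x ∈ S, (⟨x, h⟩ : ↥S) ∈ s := by
  simp only [M, Finset.mem_map, Function.Embedding.coeFn_mk]
  constructor
  · rintro ⟨a, ha, rfl⟩; exact ⟨a.2, ha⟩
  · rintro ⟨h, hs⟩; exact ⟨⟨x, h⟩, hs, rfl⟩

lemma M_injective {S : Set V} : Function.Injective (M (S := S)) :=
  fun _ _ h => Finset.map_injective _ h

lemma mem_S_of_mem_M {S : Set V} {s : Finset ↥S} {x : V} (h : x ∈ M s) : x ∈ S :=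
  (mem_M.mp h).1

/-- iso between the double induce and single induce -/
def induceFinsetIso {S : Set V} (s : Finset ↥S) :
    ((G.induce S).induce ((s : Set ↥S))) ≃g (G.induce ((M s : Finset V) : Set V)) where
  toFun a := ⟨a.1.1, by
    have := a.2
    simp only [Finset.mem_coe] at this ⊢
    exact mem_M.mpr ⟨a.1.2, this⟩⟩
  invFun x := ⟨⟨x.1, mem_S_of_mem_M (Finset.mem_coe.mp x.2)⟩, by
    have := (mem_M.mp (Finset.mem_coe.mp x.2)).2
    simpa using this⟩
  left_inv a := rfl
  right_inv x := rfl
  map_rel_iff' := Iff.rfl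

lemma isSubtree_M_iff {S : Set V} {s : Finset ↥S} :
    IsSubtree (G.induce S) s ↔ IsSubtree G (M s) := by
  unfold IsSubtree
  constructor
  · rintro ⟨h1, h2⟩
    exact ⟨Finset.map_nonempty.mpr h1, (induceFinsetIso s).connected_iff.mp h2⟩
  · rintro ⟨h1, h2⟩
    refine ⟨Finset.map_nonempty.mp h1, (induceFinsetIso s).connected_iff.mpr h2⟩

lemma isSubtree_singleton (w : V) : IsSubtree G {w} := by
  refine ⟨⟨w, Finset.mem_singleton_self w⟩, ?_⟩
  rw [Finset.coe_singleton]
  haveI : Nonempty ↥({w} : Set V) := ⟨⟨w, rfl⟩⟩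
  constructor
  intro a b
  have : a = b := Subtype.ext (by
    have ha := a.2; have hb := b.2
    simp only [Set.mem_singleton_iff] at ha hb
    rw [ha, hb])
  exact this ▸ SimpleGraph.Reachable.refl a

lemma isSubtree_univ [Fintype V] (hG : G.Connected) : IsSubtree G Finset.univ := by
  refine ⟨⟨hG.nonempty.some, Finset.mem_univ _⟩, ?_⟩
  rw [Finset.coe_univ]
  exact (induceUnivIso G).connected_iff.mpr hG

/-- the valuation hom from an induced subgraph -/
def homVal {S : Set V} : G.induce S →g G := ⟨Subtype.val, fun h => h⟩

lemma reachable_induce_of_walk {S : Set V} {a b : V} (p : G.Walk a b)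
    (h : ∀ x ∈ p.support, x ∈ S) (ha : a ∈ S) (hb : b ∈ S) :
    (G.induce S).Reachable ⟨a, ha⟩ ⟨b, hb⟩ := by
  have hc := p.connected_induce_support
  have hr := hc.preconnected ⟨a, p.start_mem_support⟩ ⟨b, p.end_mem_support⟩
  have := hr.map (G.induceHomOfLE (fun x hx => h x hx)).toHom
  exact this

lemma isSubtree_insert [DecidableEq V] {s : Finset V} (hs : IsSubtree G s) {w x : V}
    (hx : x ∈ s) (hadj : G.Adj w x) : IsSubtree G (insert w s) := by
  refine ⟨⟨x, Finset.mem_insert_of_mem hx⟩, ?_⟩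
  have : ((insert w s : Finset V) : Set V) = {w, x} ∪ (s : Set V) := by
    ext y; simp only [Finset.coe_insert, Set.mem_insert_iff, Set.mem_union,
      Set.mem_singleton_iff, Finset.mem_coe]
    constructor
    · rintro (rfl|h)
      · exact Or.inl (Or.inl rfl)
      · exact Or.inr h
    · rintro ((rfl|rfl)|h)
      · exact Or.inl rfl
      · exact Or.inr hx
      · exact Or.inr h
  rw [this]
  apply induce_union_connected (induce_pair_connected_of_adj hadj).preconnected hs.2.preconnected
  exact ⟨x, Or.inr rfl, hx⟩

lemma leaf_not_mem_support {w u : V} (hu : G.neighborSet w = {u}) :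
    ∀ {a b : V} (p : G.Walk a b), p.IsPath → a ≠ w → b ≠ w → w ∉ p.support := by
  intro a b p
  induction p with
  | nil => intro _ ha _ hmem; rw [Walk.support_nil, List.mem_singleton] at hmem; exact ha hmem.symm
  | @cons a c b h q ih =>
    intro hp ha hb hmem
    rw [Walk.support_cons, List.mem_cons] at hmem
    rcases hmem with hw|hmem
    · exact ha hw.symm
    · by_cases hc : c = w
      · subst hc
        cases q with
        | nil => exact hb rfl
        | @cons _ d _ h' q' =>
          have ha' : a ∈ G.neighborSet c := (G.adj_comm a c).mp h
          have hd' : d ∈ G.neighborSet c := h'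
          rw [hu, Set.mem_singleton_iff] at ha' hd'
          have hpath := (Walk.cons_isPath_iff h _).mp hp
          apply hpath.2
          rw [Walk.support_cons, List.mem_cons]
          exact Or.inr (ha' ▸ hd' ▸ q'.start_mem_support)
      · exact ih hp.of_cons hc hb hmem

lemma iso_leaf {W : Type} {H : SimpleGraph W} (e : G ≃g H) (x : V) :
    IsLeaf G x ↔ IsLeaf H (e x) := by
  unfold IsLeaf
  rw [← Nat.card_coe_set_eq, ← Nat.card_coe_set_eq,
    Nat.card_congr (e.mapNeighborSet x)]

lemma isLeaf_iff_degree [Fintype V] [DecidableRel G.Adj] {x : V} :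
    IsLeaf G x ↔ G.degree x = 1 := by
  unfold IsLeaf
  rw [Set.ncard_eq_toFinset_card']
  congr! 1

lemma degree_pos [Fintype V] [DecidableRel G.Adj] (hG : G.Connected)
    (hnt : Nontrivial V) (x : V) : 0 < G.degree x := by
  haveI := hnt
  obtain ⟨y, hy⟩ := exists_ne x
  obtain ⟨p⟩ := hG.preconnected x y
  rw [G.degree_pos_iff_exists_adj]
  cases p with
  | nil => exact absurd rfl hy.symm
  | cons h q => exact ⟨_, h⟩

lemma two_leaves [Fintype V] (hG : G.IsTree) (hnt : Nontrivial V) :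
    ∃ a b : V, a ≠ b ∧ IsLeaf G a ∧ IsLeaf G b := by
  classical
  have hsum : ∑ v : V, G.degree v = 2 * G.edgeFinset.card :=
    G.sum_degrees_eq_twice_card_edges
  have hedge : G.edgeFinset.card + 1 = Fintype.card V := hG.card_edgeFinset
  set L : Finset V := Finset.univ.filter (fun v => G.degree v = 1) with hL
  have hcard : 2 ≤ L.card := by
    by_contra hlt
    push_neg at hlt
    have hsplit : ∑ v ∈ (Finset.univ \ L), G.degree v + ∑ v ∈ L, G.degree v
        = ∑ v : V, G.degree v := Finset.sum_sdiff (Finset.subset_univ L)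
    have h1 : (Finset.univ \ L).card * 2 ≤ ∑ v ∈ (Finset.univ \ L), G.degree v := by
      rw [← smul_eq_mul]
      apply Finset.card_nsmul_le_sum
      intro v hv
      rw [Finset.mem_sdiff, hL, Finset.mem_filter] at hv
      have h1 : 0 < G.degree v := degree_pos hG.isConnected hnt v
      have h2 : G.degree v ≠ 1 := fun hc => hv.2 ⟨Finset.mem_univ _, hc⟩
      omega
    have h2 : L.card * 1 ≤ ∑ v ∈ L, G.degree v := by
      rw [← smul_eq_mul]
      apply Finset.card_nsmul_le_sum
      intro v hv
      exact degree_pos hG.isConnected hnt v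
    have h3 : (Finset.univ \ L).card = Fintype.card V - L.card := by
      rw [Finset.card_sdiff_of_subset (Finset.subset_univ L), Finset.card_univ]
    have h4 : L.card ≤ Fintype.card V := Finset.card_le_card (Finset.subset_univ L)
    have hn2 : 2 ≤ Fintype.card V := Fintype.one_lt_card_iff_nontrivial.mpr hnt
    omega
  obtain ⟨a, ha, b, hb, hab⟩ := (Finset.one_lt_card (s := L)).mp (by omega)
  refine ⟨a, b, hab, ?_, ?_⟩
  · exact isLeaf_iff_degree.mpr (Finset.mem_filter.mp ha).2
  · exact isLeaf_iff_degree.mpr (Finset.mem_filter.mp hb).2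

lemma degree_eq_two [Fintype V] (hG : G.IsTree) {a b : V} (hab : a ≠ b)
    (hla : IsLeaf G a) (hlb : IsLeaf G b)
    (honly : ∀ x, IsLeaf G x → x = a ∨ x = b) :
    ∀ x, x ≠ a → x ≠ b → (∀ [inst : DecidableRel G.Adj], G.degree x = 2) := by
  classical
  intro x hxa hxb inst
  have hnt : Nontrivial V := ⟨a, b, hab⟩
  have hsum : ∑ v : V, G.degree v = 2 * G.edgeFinset.card :=
    G.sum_degrees_eq_twice_card_edges
  have hedge : G.edgeFinset.card + 1 = Fintype.card V := hG.card_edgeFinset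
  have hdeg2 : ∀ y, y ≠ a → y ≠ b → 2 ≤ G.degree y := by
    intro y hya hyb
    have h1 : 0 < G.degree y := degree_pos hG.isConnected hnt y
    have h2 : G.degree y ≠ 1 := by
      intro hc
      rcases honly y (isLeaf_iff_degree.mpr hc) with rfl|rfl
      · exact hya rfl
      · exact hyb rfl
    omega
  by_contra hne
  have hgt : 2 < G.degree x := lt_of_le_of_ne (hdeg2 x hxa hxb) (Ne.symm hne)
  have hsplit : ∑ v : V, G.degree v = G.degree a + G.degree b +
      ∑ v ∈ (Finset.univ \ {a, b}), G.degree v := by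
    rw [← Finset.sum_sdiff (Finset.subset_univ {a, b})]
    rw [Finset.sum_pair hab]
    ring
  have hrest_lt : (Finset.univ \ ({a, b} : Finset V)).card * 2 <
      ∑ v ∈ (Finset.univ \ {a, b}), G.degree v := by
    have := Finset.sum_lt_sum (f := fun _ => (2:ℕ)) (g := fun v => G.degree v)
      (s := Finset.univ \ {a, b})
      (fun i hi => by
        rw [Finset.mem_sdiff, Finset.mem_insert, Finset.mem_singleton] at hi
        push_neg at hi
        exact hdeg2 i hi.2.1 hi.2.2)
      ⟨x, by
        rw [Finset.mem_sdiff, Finset.mem_insert, Finset.mem_singleton]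
        exact ⟨Finset.mem_univ _, by push_neg; exact ⟨hxa, hxb⟩⟩, hgt⟩
    simpa [Finset.sum_const, smul_eq_mul] using this
  have hcard2 : (Finset.univ \ ({a, b} : Finset V)).card = Fintype.card V - 2 := by
    rw [Finset.card_sdiff_of_subset (Finset.subset_univ _), Finset.card_univ,
      Finset.card_pair hab]
  have hda : G.degree a = 1 := isLeaf_iff_degree.mp hla
  have hdb : G.degree b = 1 := isLeaf_iff_degree.mp hlb
  have hn2 : 2 ≤ Fintype.card V := Fintype.one_lt_card_iff_nontrivial.mpr hnt
  omega

lemma cross {P : V → Prop} : ∀ {x y : V} (q : G.Walk x y), ¬ P x → P y →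
    ∃ c d, G.Adj c d ∧ ¬ P c ∧ P d := by
  intro x y q
  induction q with
  | nil => intro h1 h2; exact absurd h2 h1
  | @cons x c y h q ih =>
    intro h1 h2
    by_cases hc : P c
    · exact ⟨x, c, h, h1, hc⟩
    · exact ih hc h2

lemma endpoint_second {x y : V} (p : G.Walk x y) (hxy : x ≠ y) :
    ∃ c ∈ p.support, G.Adj x c := by
  cases p with
  | nil => exact absurd rfl hxy
  | cons h q =>
    exact ⟨_, by rw [Walk.support_cons]; exact List.mem_cons_of_mem _ q.start_mem_support, h⟩

lemma internal_two_nbrs : ∀ {x y : V} (p : G.Walk x y), p.IsPath →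
    ∀ z ∈ p.support, z ≠ x → z ≠ y →
    ∃ c d, c ≠ d ∧ c ∈ p.support ∧ d ∈ p.support ∧ G.Adj z c ∧ G.Adj z d := by
  intro x y p
  induction p with
  | nil =>
    intro _ z hz hzx _
    rw [Walk.support_nil, List.mem_singleton] at hz; exact absurd hz hzx
  | @cons x c y h q ih =>
    intro hp z hz hzx hzy
    rw [Walk.support_cons, List.mem_cons] at hz
    rcases hz with hz|hz
    · exact absurd hz hzx
    · by_cases hzc : z = c
      · subst hzc
        obtain ⟨d, hd, hadj⟩ := endpoint_second q hzy
        refine ⟨x, d, ?_, Walk.start_mem_support _,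
          by rw [Walk.support_cons]; exact List.mem_cons_of_mem _ hd, h.symm, hadj⟩
        intro hxd
        exact ((Walk.cons_isPath_iff h q).mp hp).2 (hxd ▸ hd)
      · obtain ⟨c1, c2, h12, hc1, hc2, ha1, ha2⟩ := ih hp.of_cons z hz hzc hzy
        exact ⟨c1, c2, h12, by rw [Walk.support_cons]; exact List.mem_cons_of_mem _ hc1,
          by rw [Walk.support_cons]; exact List.mem_cons_of_mem _ hc2, ha1, ha2⟩

lemma path_iso [Fintype V] (hG : G.IsTree) (hn3 : 3 ≤ Fintype.card V)
    {a b : V} (hab : a ≠ b) (hla : IsLeaf G a) (hlb : IsLeaf G b)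
    (honly : ∀ x, IsLeaf G x → x = a ∨ x = b)
    (hdeg2 : ∀ x, x ≠ a → x ≠ b → (∀ [inst : DecidableRel G.Adj], G.degree x = 2)) :
    Nonempty (G ≃g pathGraph (Fintype.card V)) := by
  classical
  set n := Fintype.card V with hn
  have hda : G.degree a = 1 := isLeaf_iff_degree.mp hla
  have hdb : G.degree b = 1 := isLeaf_iff_degree.mp hlb
  obtain ⟨w0⟩ := hG.isConnected.preconnected a b
  set p : G.Walk a b := w0.toPath.1 with hp_def
  have hp : p.IsPath := w0.toPath.2
  set l := p.support with hl
  have hnodup : l.Nodup := hp.support_nodup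
  have hcover : ∀ x : V, x ∈ l := by
    by_contra hcon
    push_neg at hcon
    obtain ⟨x, hx⟩ := hcon
    obtain ⟨q⟩ := hG.isConnected.preconnected x a
    obtain ⟨c, d, hadj, hc, hd⟩ := cross (P := fun z => z ∈ l) q hx p.start_mem_support
    by_cases hdb' : d = b
    · subst hdb'
      obtain ⟨c', hc', hadj'⟩ := endpoint_second p.reverse (Ne.symm hab)
      rw [Walk.support_reverse, List.mem_reverse] at hc'
      have hcc' : c ≠ c' := fun h => hc (h ▸ hc')
      have : ({c, c'} : Finset V) ⊆ G.neighborFinset d := by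
        intro z hz
        rw [Finset.mem_insert, Finset.mem_singleton] at hz
        rw [mem_neighborFinset]
        rcases hz with rfl|rfl
        · exact hadj.symm
        · exact hadj'
      have h2 := Finset.card_le_card this
      rw [Finset.card_pair hcc', card_neighborFinset_eq_degree, hdb] at h2
      omega
    · by_cases hda' : d = a
      · subst hda'
        obtain ⟨c', hc', hadj'⟩ := endpoint_second p hab
        have hcc' : c ≠ c' := fun h => hc (h ▸ hc')
        have : ({c, c'} : Finset V) ⊆ G.neighborFinset d := by
          intro z hz
          rw [Finset.mem_insert, Finset.mem_singleton] at hz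
          rw [mem_neighborFinset]
          rcases hz with rfl|rfl
          · exact hadj.symm
          · exact hadj'
        have h2 := Finset.card_le_card this
        rw [Finset.card_pair hcc', card_neighborFinset_eq_degree, hda] at h2
        omega
      · obtain ⟨c1, c2, h12, hc1, hc2, ha1, ha2⟩ := internal_two_nbrs p hp d hd hda' hdb'
        have hne1 : c ≠ c1 := fun h => hc (h ▸ hc1)
        have hne2 : c ≠ c2 := fun h => hc (h ▸ hc2)
        have hsub : ({c, c1, c2} : Finset V) ⊆ G.neighborFinset d := by
          intro z hz
          rw [Finset.mem_insert, Finset.mem_insert, Finset.mem_singleton] at hz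
          rw [mem_neighborFinset]
          rcases hz with rfl|rfl|rfl
          · exact hadj.symm
          · exact ha1
          · exact ha2
        have h3 := Finset.card_le_card hsub
        have hcard3 : ({c, c1, c2} : Finset V).card = 3 := by
          rw [Finset.card_insert_of_notMem (by
            rw [Finset.mem_insert, Finset.mem_singleton]; push_neg; exact ⟨hne1, hne2⟩),
            Finset.card_pair h12]
        rw [hcard3, card_neighborFinset_eq_degree, hdeg2 d hda' hdb'] at h3
        omega
  have hlen : l.length = n := by
    have h1 : l.toFinset = Finset.univ := by
      ext x; simp [hcover x]
    have h2 := List.toFinset_card_of_nodup hnodup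
    rw [h1, Finset.card_univ] at h2
    omega
  set f : Fin n → V := fun i => l.get (Fin.cast hlen.symm i) with hf_def
  have hget_inj := List.nodup_iff_injective_get.mp hnodup
  have hfinj : Function.Injective f := by
    intro i j hij
    have h2 := congrArg Fin.val (hget_inj hij)
    exact Fin.ext h2
  have hfsurj : Function.Surjective f := by
    intro x
    obtain ⟨m, hm⟩ := List.mem_iff_get.mp (hcover x)
    refine ⟨Fin.cast hlen m, ?_⟩
    rw [hf_def, ← hm]
    rfl
  have hf : ∀ (i : ℕ) (h : i < n), f ⟨i, h⟩ = l.get ⟨i, by rw [hlen]; omega⟩ := by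
    intro i h; exact congrArg l.get (Fin.ext rfl)
  have hchain := p.isChain_adj_support
  rw [List.isChain_iff_getElem] at hchain
  have hconsec : ∀ (i : ℕ) (h : i + 1 < n),
      G.Adj (l.get ⟨i, by rw [hlen]; omega⟩) (l.get ⟨i + 1, by rw [hlen]; omega⟩) := by
    intro i h
    have := hchain i (by rw [hlen]; omega)
    exact this
  have hedge : G.edgeFinset.card + 1 = n := hG.card_edgeFinset
  set E : Fin (n - 1) → Sym2 V :=
    fun i => s(l.get ⟨i.val, by rw [hlen]; have := i.isLt; omega⟩,
      l.get ⟨i.val + 1, by rw [hlen]; have := i.isLt; omega⟩) with hE_def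
  have hEmem : ∀ i, E i ∈ G.edgeFinset := by
    intro i
    rw [hE_def]
    rw [mem_edgeFinset, mem_edgeSet]
    exact hconsec i.val (by have := i.isLt; omega)
  have hgetnat : ∀ (i j : ℕ) (hi : i < l.length) (hj : j < l.length),
      l.get ⟨i, hi⟩ = l.get ⟨j, hj⟩ → i = j := by
    intro i j hi hj hij
    have := hget_inj hij
    exact congrArg Fin.val this
  have hEinj : Function.Injective E := by
    intro i j hij
    rw [hE_def] at hij
    simp only [] at hij
    rw [Sym2.eq_iff] at hij
    rcases hij with ⟨h1, h2⟩|⟨h1, h2⟩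
    · exact Fin.ext (hgetnat _ _ _ _ h1)
    · have e1 := hgetnat _ _ _ _ h1
      have e2 := hgetnat _ _ _ _ h2
      omega
  have hcardeq : Fintype.card (Fin (n - 1)) = Fintype.card ↥G.edgeFinset := by
    rw [Fintype.card_coe, Fintype.card_fin]
    omega
  have hEbij : Function.Bijective (fun i => (⟨E i, hEmem i⟩ : ↥G.edgeFinset)) := by
    rw [Fintype.bijective_iff_injective_and_card]
    exact ⟨fun i j hij => hEinj (congrArg Subtype.val hij), hcardeq⟩
  have hEsurj : ∀ e ∈ G.edgeFinset, ∃ i, E i = e := by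
    intro e he
    obtain ⟨i, hi⟩ := hEbij.2 ⟨e, he⟩
    exact ⟨i, congrArg Subtype.val hi⟩
  have hadj_iff : ∀ i j : Fin n, G.Adj (f i) (f j) ↔ ((i : ℕ) + 1 = j ∨ (j : ℕ) + 1 = i) := by
    intro i j
    constructor
    · intro hadj
      obtain ⟨k, hk⟩ := hEsurj s(f i, f j) (by rw [mem_edgeFinset, mem_edgeSet]; exact hadj)
      rw [hE_def] at hk
      simp only [] at hk
      rw [hf i.val i.isLt] at hk
      rw [hf j.val j.isLt] at hk
      rw [Sym2.eq_iff] at hk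
      rcases hk with ⟨h1, h2⟩|⟨h1, h2⟩
      · have e1 := hgetnat _ _ _ _ h1
        have e2 := hgetnat _ _ _ _ h2
        omega
      · have e1 := hgetnat _ _ _ _ h1
        have e2 := hgetnat _ _ _ _ h2
        omega
    · intro hij
      rcases hij with hij|hij
      · have h := hconsec i.val (by have := j.isLt; omega)
        rw [← hf i.val i.isLt] at h
        have : (⟨i.val + 1, by have := j.isLt; omega⟩ : Fin n) = j := Fin.ext (by simpa using hij)
        rw [← this]
        rw [hf (i.val + 1)]
        convert h using 2
      · rw [G.adj_comm]
        have h := hconsec j.val (by have := i.isLt; omega)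
        rw [← hf j.val j.isLt] at h
        have : (⟨j.val + 1, by have := i.isLt; omega⟩ : Fin n) = i := Fin.ext (by simpa using hij)
        rw [← this]
        rw [hf (j.val + 1)]
        convert h using 2
  refine ⟨SimpleGraph.Iso.symm ⟨Equiv.ofBijective f ⟨hfinj, hfsurj⟩, ?_⟩⟩
  intro i j
  show G.Adj (f i) (f j) ↔ (pathGraph n).Adj i j
  rw [hadj_iff, pathGraph_adj]

lemma ivt {n : ℕ} : ∀ {a b : Fin n} (p : (pathGraph n).Walk a b) {k : ℕ},
    a.val ≤ k → k ≤ b.val → ∃ x ∈ p.support, x.val = k := by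
  intro a b p
  induction p with
  | nil => intro k h1 h2; exact ⟨_, Walk.start_mem_support _, by omega⟩
  | @cons a c b h q ih =>
    intro k h1 h2
    rcases eq_or_lt_of_le h1 with heq|hlt
    · exact ⟨a, Walk.start_mem_support _, heq⟩
    · have hc : c.val ≤ k := by
        rcases pathGraph_adj.mp h with h'|h' <;> omega
      obtain ⟨x, hx, hxk⟩ := ih hc h2
      exact ⟨x, by rw [Walk.support_cons]; exact List.mem_cons_of_mem _ hx, hxk⟩

lemma pathGraph_leaf_val {n : ℕ} (hn : 3 ≤ n) {i : Fin n}
    (h : IsLeaf (pathGraph n) i) : i.val = 0 ∨ i.val = n - 1 := by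
  by_contra hcon
  push_neg at hcon
  have h1 : 0 < i.val := Nat.pos_of_ne_zero hcon.1
  have h2 : i.val < n - 1 := lt_of_le_of_ne (by have := i.isLt; omega) hcon.2
  have hi : i.val < n := i.isLt
  set j1 : Fin n := ⟨i.val - 1, by omega⟩
  set j2 : Fin n := ⟨i.val + 1, by omega⟩
  have ha1 : j1 ∈ (pathGraph n).neighborSet i := by
    show (pathGraph n).Adj i j1
    rw [pathGraph_adj]; right; show i.val - 1 + 1 = i.val; omega
  have ha2 : j2 ∈ (pathGraph n).neighborSet i := by
    show (pathGraph n).Adj i j2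
    rw [pathGraph_adj]; left; show i.val + 1 = i.val + 1; rfl
  have hne : j1 ≠ j2 := by
    intro hc
    simp only [j1, j2, Fin.mk.injEq] at hc
    omega
  have : 1 < ((pathGraph n).neighborSet i).ncard :=
    (Set.one_lt_ncard_iff (Set.toFinite _)).mpr ⟨j1, j2, ha1, ha2, hne⟩
  rw [h] at this
  omega

lemma mem_of_walk_iso {n : ℕ} (e : G ≃g pathGraph n) {a b : V} (p : G.Walk a b)
    (hav : (e a).val = 0) (hbv : (e b).val = n - 1) (x : V) : x ∈ p.support := by
  obtain ⟨y, hy, hyval⟩ := ivt (p.map e.toHom) (k := (e x).val)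
    (by rw [show (e.toHom a : Fin n) = e a from rfl, hav]; omega)
    (by rw [show (e.toHom b : Fin n) = e b from rfl, hbv]; have := (e x).isLt; omega)
  have hyx : y = e x := Fin.ext hyval
  rw [hyx, Walk.support_map, List.mem_map] at hy
  obtain ⟨z, hz, hze⟩ := hy
  have hzx : z = x := e.toEquiv.injective hze
  rwa [hzx] at hz

lemma induce_adj' {S : Set V} {a b : ↥S} : (G.induce S).Adj a b ↔ G.Adj a.1 b.1 := Iff.rfl

lemma leaf_up {w : V} {x : ↥{y : V | y ≠ w}} (h : IsLeaf (G.induce {y : V | y ≠ w}) x)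
    (hnadj : ¬ G.Adj w x.1) : IsLeaf G x.1 := by
  obtain ⟨z, hz⟩ := Set.ncard_eq_one.mp h
  unfold IsLeaf
  rw [Set.ncard_eq_one]
  refine ⟨z.1, ?_⟩
  ext y
  simp only [mem_neighborSet, Set.mem_singleton_iff]
  constructor
  · intro hadj
    have hyw : y ≠ w := by
      rintro rfl
      exact hnadj hadj.symm
    have : (⟨y, hyw⟩ : ↥{y : V | y ≠ w}) ∈ (G.induce {y : V | y ≠ w}).neighborSet x := by
      rw [mem_neighborSet, induce_adj']
      exact hadj
    rw [hz, Set.mem_singleton_iff] at this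
    exact congrArg Subtype.val this
  · intro hy
    have : z ∈ (G.induce {y : V | y ≠ w}).neighborSet x := by rw [hz]; rfl
    rw [mem_neighborSet, induce_adj'] at this
    exact hy ▸ this

lemma leaf_up' {w : V} {x : ↥{y : V | y ≠ w}} (h : IsLeaf (G.induce {y : V | y ≠ w}) x)
    (hnl : ¬ IsLeaf G x.1) : G.Adj w x.1 := by
  by_contra hc
  exact hnl (leaf_up h hc)

lemma G'_connected [Fintype V] {w : V} (hG : G.IsTree) {u : V} (hu : G.neighborSet w = {u}) :
    (G.induce {y : V | y ≠ w}).Connected := by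
  classical
  have huw : u ≠ w := by
    have : G.Adj w u := by rw [← mem_neighborSet, hu]; rfl
    exact this.ne'
  haveI : Nonempty ↥{y : V | y ≠ w} := ⟨⟨u, huw⟩⟩
  constructor
  intro a b
  obtain ⟨q⟩ := hG.isConnected.preconnected a.1 b.1
  set p : G.Walk a.1 b.1 := q.toPath.1 with hp_def
  have hp : p.IsPath := q.toPath.2
  have hnw : w ∉ p.support := leaf_not_mem_support hu p hp a.2 b.2
  have hsub : ∀ x ∈ p.support, x ∈ {y : V | y ≠ w} := by
    intro x hx
    simp only [Set.mem_setOf_eq]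
    rintro rfl
    exact hnw hx
  have := reachable_induce_of_walk p hsub a.2 b.2
  convert this <;> exact Subtype.ext rfl

lemma G'_acyclic (hG : G.IsAcyclic) (S : Set V) : (G.induce S).IsAcyclic := by
  intro v c hc
  have := hc.map (f := homVal) Subtype.val_injective
  exact hG _ this

end DelLeaf

open DelLeaf

/-- Deleting a leaf `w` from a tree `T` on `n ≥ 3` vertices strictly
decreases `F` and `F*`; moreover for every vertex `v` of `T - w` one has
`f_{T-w}(v) < f_T(v)` and `f*_{T-w}(v) ≤ f*_T(v)`, with equality in the latter iff `T`
is a path and `v` is the leaf of `T` other than `w`. -/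
theorem deleting_leaf {V : Type} [Fintype V] (n : ℕ) (hn : 3 ≤ n)
    (G : SimpleGraph V) (hG : G.IsTree) (hcard : Fintype.card V = n)
    (w : V) (hw : IsLeaf G w) :
    numSubtrees (G.induce {x : V | x ≠ w}) < numSubtrees G ∧
      numLeafSubtrees (G.induce {x : V | x ≠ w}) < numLeafSubtrees G ∧
      (∀ v : {x : V | x ≠ w},
        numSubtreesContaining (G.induce {x : V | x ≠ w}) v <
          numSubtreesContaining G (v : V)) ∧
      (∀ v : {x : V | x ≠ w},
        numLeafSubtreesContaining (G.induce {x : V | x ≠ w}) v ≤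
            numLeafSubtreesContaining G (v : V) ∧
          (numLeafSubtreesContaining (G.induce {x : V | x ≠ w}) v =
              numLeafSubtreesContaining G (v : V) ↔
            Nonempty (G ≃g SimpleGraph.pathGraph n) ∧ IsLeaf G (v : V))) := by
  classical
  subst hcard
  obtain ⟨u, hu⟩ := Set.ncard_eq_one.mp hw
  have hadj_wu : G.Adj w u := by rw [← SimpleGraph.mem_neighborSet, hu]; rfl
  have huw : u ≠ w := hadj_wu.ne'
  have hwMs : ∀ s : Finset ↥{x : V | x ≠ w}, w ∉ M s := fun s h => mem_S_of_mem_M h rfl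
  refine ⟨?_, ?_, ?_, ?_⟩
  · -- part 1
    unfold numSubtrees
    have himg : M '' {s : Finset ↥{x : V | x ≠ w} | IsSubtree (G.induce {x : V | x ≠ w}) s}
        ⊆ {s : Finset V | IsSubtree G s} := by
      rintro _ ⟨s, hs, rfl⟩
      exact isSubtree_M_iff.mp hs
    have hne : M '' {s : Finset ↥{x : V | x ≠ w} | IsSubtree (G.induce {x : V | x ≠ w}) s}
        ≠ {s : Finset V | IsSubtree G s} := by
      intro hcontra
      have h1 : ({w} : Finset V) ∈ M '' {s : Finset ↥{x : V | x ≠ w} |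
          IsSubtree (G.induce {x : V | x ≠ w}) s} := by
        rw [hcontra]
        exact isSubtree_singleton w
      obtain ⟨s, _, heq⟩ := h1
      have : w ∈ M s := by rw [heq]; exact Finset.mem_singleton_self w
      exact hwMs s this
    calc {s : Finset ↥{x : V | x ≠ w} | IsSubtree (G.induce {x : V | x ≠ w}) s}.ncard
        = (M '' {s : Finset ↥{x : V | x ≠ w} |
            IsSubtree (G.induce {x : V | x ≠ w}) s}).ncard :=
          (Set.ncard_image_of_injOn (M_injective.injOn)).symm
      _ < _ := Set.ncard_lt_ncard (ssubset_of_subset_of_ne himg hne) (Set.toFinite _)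
  · -- part 2
    unfold numLeafSubtrees
    set A2 := {s : Finset ↥{x : V | x ≠ w} | IsSubtree (G.induce {x : V | x ≠ w}) s ∧
      ∃ x ∈ s, IsLeaf (G.induce {x : V | x ≠ w}) x} with hA2
    set B2 := {s : Finset V | IsSubtree G s ∧ ∃ x ∈ s, IsLeaf G x} with hB2
    set φ : Finset ↥{x : V | x ≠ w} → Finset V := fun s =>
      if ∃ ℓ ∈ M s, IsLeaf G ℓ then M s else insert w (M s) with hφ
    have hMsub : ∀ s : Finset ↥{x : V | x ≠ w}, M s ⊆ φ s := by
      intro s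
      simp only [hφ]
      by_cases hc : ∃ ℓ ∈ M s, IsLeaf G ℓ
      · rw [if_pos hc]
      · rw [if_neg hc]; exact Finset.subset_insert _ _
    have himg : φ '' A2 ⊆ B2 := by
      rintro _ ⟨s, hs, rfl⟩
      simp only [hφ]
      by_cases hc : ∃ ℓ ∈ M s, IsLeaf G ℓ
      · rw [if_pos hc]
        exact ⟨isSubtree_M_iff.mp hs.1, hc⟩
      · rw [if_neg hc]
        obtain ⟨x, hxs, hxleaf⟩ := hs.2
        have hxnl : ¬ IsLeaf G x.1 := fun hl => hc ⟨x.1, mem_M.mpr ⟨x.2, hxs⟩, hl⟩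
        have hadjx : G.Adj w x.1 := leaf_up' hxleaf hxnl
        refine ⟨isSubtree_insert (isSubtree_M_iff.mp hs.1) (mem_M.mpr ⟨x.2, hxs⟩) hadjx,
          w, Finset.mem_insert_self _ _, hw⟩
    have hinj : Set.InjOn φ A2 := by
      intro s _ t _ heq
      simp only [hφ] at heq
      by_cases h1 : ∃ ℓ ∈ M s, IsLeaf G ℓ <;> by_cases h2 : ∃ ℓ ∈ M t, IsLeaf G ℓ
      · rw [if_pos h1, if_pos h2] at heq
        exact M_injective heq
      · rw [if_pos h1, if_neg h2] at heq
        exact absurd (heq ▸ Finset.mem_insert_self w (M t)) (hwMs s)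
      · rw [if_neg h1, if_pos h2] at heq
        exact absurd (heq ▸ Finset.mem_insert_self w (M s)) (hwMs t)
      · rw [if_neg h1, if_neg h2] at heq
        apply M_injective
        rw [← Finset.erase_insert (hwMs s), ← Finset.erase_insert (hwMs t), heq]
    have hne : φ '' A2 ≠ B2 := by
      intro hcontra
      have h1 : ({w} : Finset V) ∈ φ '' A2 := by
        rw [hcontra, hB2]
        exact ⟨isSubtree_singleton w, w, Finset.mem_singleton_self w, hw⟩
      obtain ⟨s, hsA, heq⟩ := h1
      obtain ⟨a, ha⟩ := hsA.1.1
      have haw : a.1 ∈ ({w} : Finset V) := by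
        rw [← heq]
        exact hMsub s (mem_M.mpr ⟨a.2, ha⟩)
      exact a.2 (Finset.mem_singleton.mp haw)
    calc A2.ncard = (φ '' A2).ncard := (Set.ncard_image_of_injOn hinj).symm
      _ < B2.ncard := Set.ncard_lt_ncard (ssubset_of_subset_of_ne himg hne) (Set.toFinite _)
  · -- part 3
    intro v
    unfold numSubtreesContaining
    have himg : M '' {s : Finset ↥{x : V | x ≠ w} |
        IsSubtree (G.induce {x : V | x ≠ w}) s ∧ v ∈ s}
        ⊆ {s : Finset V | IsSubtree G s ∧ (v : V) ∈ s} := by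
      rintro _ ⟨s, ⟨hs, hv⟩, rfl⟩
      exact ⟨isSubtree_M_iff.mp hs, mem_M.mpr ⟨v.2, hv⟩⟩
    have hne : M '' {s : Finset ↥{x : V | x ≠ w} |
        IsSubtree (G.induce {x : V | x ≠ w}) s ∧ v ∈ s}
        ≠ {s : Finset V | IsSubtree G s ∧ (v : V) ∈ s} := by
      intro hcontra
      have h1 : (Finset.univ : Finset V) ∈ M '' {s : Finset ↥{x : V | x ≠ w} |
          IsSubtree (G.induce {x : V | x ≠ w}) s ∧ v ∈ s} := by
        rw [hcontra]
        exact ⟨isSubtree_univ hG.isConnected, Finset.mem_univ _⟩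
      obtain ⟨s, _, heq⟩ := h1
      have : w ∈ M s := by rw [heq]; exact Finset.mem_univ w
      exact hwMs s this
    calc {s : Finset ↥{x : V | x ≠ w} |
          IsSubtree (G.induce {x : V | x ≠ w}) s ∧ v ∈ s}.ncard
        = (M '' {s : Finset ↥{x : V | x ≠ w} |
            IsSubtree (G.induce {x : V | x ≠ w}) s ∧ v ∈ s}).ncard :=
          (Set.ncard_image_of_injOn (M_injective.injOn)).symm
      _ < _ := Set.ncard_lt_ncard (ssubset_of_subset_of_ne himg hne) (Set.toFinite _)
  · -- part 4
    intro v
    unfold numLeafSubtreesContaining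
    set A4 := {s : Finset ↥{x : V | x ≠ w} | IsSubtree (G.induce {x : V | x ≠ w}) s ∧
      v ∈ s ∧ ∃ x ∈ s, x ≠ v ∧ IsLeaf (G.induce {x : V | x ≠ w}) x} with hA4
    set B4 := {s : Finset V | IsSubtree G s ∧ (v : V) ∈ s ∧
      ∃ x ∈ s, x ≠ (v : V) ∧ IsLeaf G x} with hB4
    set φ : Finset ↥{x : V | x ≠ w} → Finset V := fun s =>
      if ∃ ℓ ∈ M s, ℓ ≠ (v : V) ∧ IsLeaf G ℓ then M s else insert w (M s) with hφ
    have hvne : (w : V) ≠ (v : V) := Ne.symm v.2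
    have himg : φ '' A4 ⊆ B4 := by
      rintro _ ⟨s, hs, rfl⟩
      simp only [hφ]
      by_cases hc : ∃ ℓ ∈ M s, ℓ ≠ (v : V) ∧ IsLeaf G ℓ
      · rw [if_pos hc]
        exact ⟨isSubtree_M_iff.mp hs.1, mem_M.mpr ⟨v.2, hs.2.1⟩, hc⟩
      · rw [if_neg hc]
        obtain ⟨x, hxs, hxv, hxleaf⟩ := hs.2.2
        have hxv1 : x.1 ≠ (v : V) := fun h => hxv (Subtype.ext h)
        have hxnl : ¬ IsLeaf G x.1 := fun hl => hc ⟨x.1, mem_M.mpr ⟨x.2, hxs⟩, hxv1, hl⟩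
        have hadjx : G.Adj w x.1 := leaf_up' hxleaf hxnl
        exact ⟨isSubtree_insert (isSubtree_M_iff.mp hs.1) (mem_M.mpr ⟨x.2, hxs⟩) hadjx,
          Finset.mem_insert_of_mem (mem_M.mpr ⟨v.2, hs.2.1⟩),
          w, Finset.mem_insert_self _ _, hvne, hw⟩
    have hinj : Set.InjOn φ A4 := by
      intro s _ t _ heq
      simp only [hφ] at heq
      by_cases h1 : ∃ ℓ ∈ M s, ℓ ≠ (v : V) ∧ IsLeaf G ℓ <;>
        by_cases h2 : ∃ ℓ ∈ M t, ℓ ≠ (v : V) ∧ IsLeaf G ℓ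
      · rw [if_pos h1, if_pos h2] at heq
        exact M_injective heq
      · rw [if_pos h1, if_neg h2] at heq
        exact absurd (heq ▸ Finset.mem_insert_self w (M t)) (hwMs s)
      · rw [if_neg h1, if_pos h2] at heq
        exact absurd (heq ▸ Finset.mem_insert_self w (M s)) (hwMs t)
      · rw [if_neg h1, if_neg h2] at heq
        apply M_injective
        rw [← Finset.erase_insert (hwMs s), ← Finset.erase_insert (hwMs t), heq]
    have hkey : φ '' A4 = B4 ↔
        (Nonempty (G ≃g SimpleGraph.pathGraph (Fintype.card V)) ∧ IsLeaf G (v : V)) := by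
      constructor
      · intro him
        have huniv : (Finset.univ : Finset V) ∈ B4 := ⟨isSubtree_univ hG.isConnected,
          Finset.mem_univ _, w, Finset.mem_univ _, hvne, hw⟩
        rw [← him] at huniv
        obtain ⟨s, hsA, heq⟩ := huniv
        simp only [hφ] at heq
        by_cases hc : ∃ ℓ ∈ M s, ℓ ≠ (v : V) ∧ IsLeaf G ℓ
        · rw [if_pos hc] at heq
          have : w ∈ M s := by rw [heq]; exact Finset.mem_univ w
          exact absurd this (hwMs s)
        · rw [if_neg hc] at heq
          have honly : ∀ x, IsLeaf G x → x = (v : V) ∨ x = w := by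
            intro x hx
            by_contra hcon
            push_neg at hcon
            have hxmem : x ∈ insert w (M s) := by rw [heq]; exact Finset.mem_univ x
            rcases Finset.mem_insert.mp hxmem with h|h
            · exact hcon.2 h
            · exact hc ⟨x, h, hcon.1, hx⟩
          have hnt : Nontrivial V := Fintype.one_lt_card_iff_nontrivial.mp (by omega)
          obtain ⟨a, b, hab, hla, hlb⟩ := two_leaves hG hnt
          have hvleaf : IsLeaf G (v : V) := by
            rcases honly a hla with rfl|rfl
            · exact hla
            · rcases honly b hlb with rfl|rfl
              · exact hlb
              · exact absurd rfl hab
          have hdeg2 := degree_eq_two hG (Ne.symm hvne) hvleaf hw honly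
          exact ⟨path_iso hG hn (Ne.symm hvne) hvleaf hw honly hdeg2, hvleaf⟩
      · rintro ⟨⟨e⟩, hvleaf⟩
        have hvw : (e (v : V)) ≠ (e w) := fun h => v.2 (e.toEquiv.injective h)
        have hev := (iso_leaf e (v : V)).mp hvleaf
        have hew := (iso_leaf e w).mp hw
        have h2 := pathGraph_leaf_val hn hev
        have h3 := pathGraph_leaf_val hn hew
        have hvw' : (e (v : V)).val ≠ (e w).val := fun h => hvw (Fin.ext h)
        have hleafiff : ∀ x, IsLeaf G x → x = (v : V) ∨ x = w := by
          intro x hx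
          have h1 := pathGraph_leaf_val hn ((iso_leaf e x).mp hx)
          have hor : (e x).val = (e (v : V)).val ∨ (e x).val = (e w).val := by omega
          rcases hor with h|h
          · exact Or.inl (e.toEquiv.injective (Fin.ext h))
          · exact Or.inr (e.toEquiv.injective (Fin.ext h))
        apply Set.Subset.antisymm himg
        intro s' hs'
        obtain ⟨hsub', hv', x, hxs', hxv', hxleaf⟩ := hs'
        have hxw : w = x := by
          rcases hleafiff x hxleaf with h|h
          · exact absurd h hxv'
          · exact h.symm
        subst hxw
        obtain ⟨q⟩ := hsub'.2.preconnected ⟨(v : V), Finset.mem_coe.mpr hv'⟩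
          ⟨w, Finset.mem_coe.mpr hxs'⟩
        have hpsub : ∀ z ∈ (q.map (homVal (G := G))).support, z ∈ s' := by
          intro z hz
          rw [Walk.support_map, List.mem_map] at hz
          obtain ⟨z', _, rfl⟩ := hz
          exact Finset.mem_coe.mp z'.2
        have hs'univ : s' = Finset.univ := by
          apply Finset.eq_univ_iff_forall.mpr
          intro x0
          rcases h2 with h2'|h2'
          · have hwv : (e w).val = Fintype.card V - 1 := by omega
            exact hpsub x0 (mem_of_walk_iso e (q.map (homVal (G := G))) h2' hwv x0)
          · have hwv : (e w).val = 0 := by omega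
            refine hpsub x0 ?_
            have hmem := mem_of_walk_iso e (q.map (homVal (G := G))).reverse hwv h2' x0
            rwa [Walk.support_reverse, List.mem_reverse] at hmem
        subst hs'univ
        haveI : Fintype ↥{x : V | x ≠ w} := Fintype.ofFinite _
        have hMs₀ : M (Finset.univ : Finset ↥{x : V | x ≠ w}) = Finset.univ.erase w := by
          ext z
          rw [mem_M, Finset.mem_erase]
          constructor
          · rintro ⟨hz, _⟩; exact ⟨hz, Finset.mem_univ _⟩
          · rintro ⟨hz, _⟩; exact ⟨hz, Finset.mem_univ _⟩
        have hcond : ¬ ∃ ℓ ∈ M (Finset.univ : Finset ↥{x : V | x ≠ w}),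
            ℓ ≠ (v : V) ∧ IsLeaf G ℓ := by
          rintro ⟨ℓ, hmem, hne, hleaf⟩
          rcases hleafiff ℓ hleaf with rfl|rfl
          · exact hne rfl
          · rw [hMs₀] at hmem; exact (Finset.mem_erase.mp hmem).1 rfl
        refine ⟨Finset.univ, ?_, ?_⟩
        · have htree' : (G.induce {x : V | x ≠ w}).IsTree :=
            ⟨G'_connected hG hu, G'_acyclic hG.IsAcyclic _⟩
          have hcard_erase : 1 < (Finset.univ.erase w).card := by
            rw [Finset.card_erase_of_mem (Finset.mem_univ w), Finset.card_univ]; omega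
          obtain ⟨a, ha, b, hb, hab⟩ := Finset.one_lt_card.mp hcard_erase
          have hnt' : Nontrivial ↥{x : V | x ≠ w} :=
            ⟨⟨a, (Finset.mem_erase.mp ha).1⟩, ⟨b, (Finset.mem_erase.mp hb).1⟩,
              fun h => hab (congrArg Subtype.val h)⟩
          obtain ⟨ℓ1, ℓ2, h12, hl1, hl2⟩ := two_leaves htree' hnt'
          refine ⟨⟨⟨v, Finset.mem_univ v⟩, ?_⟩, Finset.mem_univ v, ?_⟩
          · rw [Finset.coe_univ]
            exact (induceUnivIso _).connected_iff.mpr htree'.isConnected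
          · rcases eq_or_ne ℓ1 v with rfl|hne1
            · exact ⟨ℓ2, Finset.mem_univ _, (Ne.symm h12), hl2⟩
            · exact ⟨ℓ1, Finset.mem_univ _, hne1, hl1⟩
        · simp only [hφ]
          rw [if_neg hcond, hMs₀, Finset.insert_erase (Finset.mem_univ w)]
    have hle : A4.ncard ≤ B4.ncard := by
      rw [← Set.ncard_image_of_injOn hinj]
      exact Set.ncard_le_ncard himg (Set.toFinite _)
    refine ⟨hle, ?_⟩
    constructor
    · intro heqn
      apply hkey.mp
      apply Set.eq_of_subset_of_ncard_le himg ?_ (Set.toFinite _)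
      rw [Set.ncard_image_of_injOn hinj]
      omega
    · intro h
      rw [← Set.ncard_image_of_injOn hinj, hkey.mpr h]
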